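/- There exist no integers x, y, z₁, z₂, z₃ such that −2x² − 2y² − 2(z₁²+z₂²+z₃²) + 6xy + (4x+2y)(z₁+z₂+z₃) = 2 and 7x + 4y + z₁ + z₂ + z₃ = 7. -/
import Mathlib


/-- Proposition 4.5: no class `D` in the lattice `𝕃` with `D² = 2` and `D·C = 7`. -/
theorem stmt_7 :
    ¬ ∃ x y z₁ z₂ z₃ : ℤ,
      -2 * x ^ 2 - 2 * y ^ 2 - 2 * (z₁ ^ 2 + z₂ ^ 2 + z₃ ^ 2) + 6 * x * y
        + (4 * x + 2 * y) * (z₁ + z₂ + z₃) = 2 ∧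
      7 * x + 4 * y + z₁ + z₂ + z₃ = 7 := by
  rintro ⟨x, y, z₁, z₂, z₃, h1, h2⟩
  have hid : 12 - (94*x + 46*y - 70)^2 - 798*(y*(y-1))
      = 94*((z₁-z₂)^2 + (z₁-z₃)^2 + (z₂-z₃)^2) := by
    linear_combination 141*h1 + (-1222*x - 658*y + 94*(z₁+z₂+z₃) + 658)*h2
  have hkey : (94*x + 46*y - 70)^2 + 798*(y*(y-1)) ≤ 12 := by
    nlinarith [sq_nonneg (z₁-z₂), sq_nonneg (z₁-z₃), sq_nonneg (z₂-z₃)]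
  have hy : 0 ≤ y*(y-1) := by
    rcases le_or_gt 1 y with h | h
    · nlinarith
    · have : y ≤ 0 := by omega
      nlinarith
  have hA : (94*x + 46*y - 70)^2 ≤ 12 := by nlinarith
  have h3 : -3 ≤ 94*x + 46*y - 70 ∧ 94*x + 46*y - 70 ≤ 3 := by
    constructor <;> nlinarith
  have hy01 : y = 0 ∨ y = 1 := by
    have h798 : 798*(y*(y-1)) ≤ 12 := by nlinarith
    have : y*(y-1) = 0 := by omega
    rcases mul_eq_zero.mp this with h | h <;> omega
  omega
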